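/- Let X(α) = Σ_{n≥1} a_n α^n be the unique solution in H_R[[α]] of the combinatorial Dyson–Schwinger equation X = α B₊(1/(1−X)), and let φ: H_R → K[x] be the algebra morphism with φ ∘ B₊ = ∫₀ ∘ φ (so φ(f) = x^{|f|}/f!). Then φ(a_{n+1}) = 2^{−n} C_n x^{n+1}, where C_n = (2n)!/(n!(n+1)!) is the n-th Catalan number; equivalently Σ_{t tree, |t|=n+1} σ(t)/t! = 2^{−n} C_n, where σ(t) counts the planar embeddings of t. -/

import Mathlib

/-- Planar rooted trees. -/
inductive RTree : Type where
  | node : List RTree → RTree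

mutual
/-- Number of nodes of a tree. -/
def tsize : RTree → ℕ
  | .node l => 1 + fsize l
/-- Number of nodes of a forest. -/
def fsize : List RTree → ℕ
  | [] => 0
  | t :: ts => tsize t + fsize ts
end

mutual
/-- The tree factorial `t! = Π_{v ∈ V(t)} |t_v|`. -/
def tfact : RTree → ℕ
  | .node l => (1 + fsize l) * ffact l
/-- The tree factorial of a forest (product over its trees). -/
def ffact : List RTree → ℕ
  | [] => 1
  | t :: ts => tfact t * ffact ts
end

mutual
/-- The multiset of all planar rooted trees with `n` nodes; each unordered
rooted tree `t` occurs with multiplicity `σ(t)`, the number of its planar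
embeddings. -/
def treesOf : ℕ → Multiset RTree
  | 0 => 0
  | n + 1 => (forestsOf n).map RTree.node
  termination_by n => 2 * n
/-- The multiset of all planar rooted forests with `n` nodes. -/
def forestsOf : ℕ → Multiset (List RTree)
  | 0 => {[]}
  | n + 1 => ((Finset.range (n + 1)).attach.val).bind fun j =>
      (treesOf (n + 1 - j.1)).bind fun t => (forestsOf j.1).map (t :: ·)
  termination_by n => 2 * n + 1
  decreasing_by
  · omega
  · have := j.2; simp only [Finset.mem_range] at this; omega
end

open TensorProduct Polynomial

variable (K : Type) [Field K] [CharZero K]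

/-- The algebra of rooted trees: the monoid algebra on the free monoid of
rooted trees (with basis the rooted forests). -/
abbrev HTrees := MonoidAlgebra K (FreeMonoid RTree)

/-- The grafting operator `B₊`. -/
noncomputable def Bplus : HTrees K →ₗ[K] HTrees K :=
  MonoidAlgebra.mapDomainLinearMap K K
    (fun f : FreeMonoid RTree => FreeMonoid.of (RTree.node (FreeMonoid.toList f)))


section Aux

lemma treesOf_zero : treesOf 0 = 0 := by rw [treesOf]
lemma treesOf_succ (n : ℕ) : treesOf (n + 1) = (forestsOf n).map RTree.node := by rw [treesOf]
lemma forestsOf_zero : forestsOf 0 = {[]} := by rw [forestsOf]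
lemma forestsOf_succ (n : ℕ) : forestsOf (n + 1) =
    ((Finset.range (n + 1)).attach.val).bind fun j =>
      (treesOf (n + 1 - j.1)).bind fun t => (forestsOf j.1).map (t :: ·) := by
  rw [forestsOf]

lemma fsize_mem : ∀ n : ℕ, ∀ l ∈ forestsOf n, fsize l = n := by
  intro n
  induction n using Nat.strong_induction_on with
  | _ n IH =>
    match n with
    | 0 =>
      intro l hl
      rw [forestsOf_zero, Multiset.mem_singleton] at hl
      subst hl; rfl
    | n + 1 =>
      intro l hl
      rw [forestsOf_succ, Multiset.mem_bind] at hl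
      obtain ⟨j, hj, hl⟩ := hl
      rw [Multiset.mem_bind] at hl
      obtain ⟨t, ht, hl⟩ := hl
      rw [Multiset.mem_map] at hl
      obtain ⟨l', hl', rfl⟩ := hl
      have hjn : j.1 ≤ n := by have := j.2; simp only [Finset.mem_range] at this; omega
      have e : n + 1 - j.1 = (n - j.1) + 1 := by omega
      rw [e, treesOf_succ, Multiset.mem_map] at ht
      obtain ⟨f, hf, rfl⟩ := ht
      have h1 : fsize f = n - j.1 := IH (n - j.1) (by omega) f hf
      have h2 : fsize l' = j.1 := IH j.1 (by omega) l' hl'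
      show tsize (RTree.node f) + fsize l' = n + 1
      rw [h2, tsize, h1]
      omega

lemma FS_zero : ((forestsOf 0).map (fun l => ((ffact l : ℚ))⁻¹)).sum = 1 := by
  rw [forestsOf_zero]
  simp [ffact]

lemma TS_succ (n : ℕ) : ((treesOf (n + 1)).map (fun t => ((tfact t : ℚ))⁻¹)).sum
    = ((n : ℚ) + 1)⁻¹ * ((forestsOf n).map (fun l => ((ffact l : ℚ))⁻¹)).sum := by
  rw [treesOf_succ, Multiset.map_map]
  rw [Multiset.map_congr rfl (fun l hl => ?_), Multiset.sum_map_mul_left]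
  show ((tfact (RTree.node l) : ℚ))⁻¹ = ((n : ℚ) + 1)⁻¹ * ((ffact l : ℚ))⁻¹
  rw [tfact, fsize_mem n l hl]
  push_cast
  rw [mul_inv]
  norm_num [add_comm]

lemma FS_succ (n : ℕ) : ((forestsOf (n + 1)).map (fun l => ((ffact l : ℚ))⁻¹)).sum
    = ∑ k ∈ Finset.range (n + 1),
        ((treesOf (k + 1)).map (fun t => ((tfact t : ℚ))⁻¹)).sum *
        ((forestsOf (n - k)).map (fun l => ((ffact l : ℚ))⁻¹)).sum := by
  rw [forestsOf_succ, Multiset.map_bind, Multiset.sum_bind]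
  have step : ∀ j : {x // x ∈ Finset.range (n+1)},
      ((((treesOf (n + 1 - j.1)).bind fun t => (forestsOf j.1).map (t :: ·)).map
        (fun l => ((ffact l : ℚ))⁻¹)).sum)
      = ((treesOf (n + 1 - j.1)).map (fun t => ((tfact t : ℚ))⁻¹)).sum *
        ((forestsOf j.1).map (fun l => ((ffact l : ℚ))⁻¹)).sum := by
    intro j
    rw [Multiset.map_bind, Multiset.sum_bind]
    rw [Multiset.map_congr rfl (fun t ht => ?_), Multiset.sum_map_mul_right]
    show (((forestsOf j.1).map (t :: ·)).map fun l => ((ffact l : ℚ))⁻¹).sum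
        = ((tfact t : ℚ))⁻¹ * ((forestsOf j.1).map fun l => ((ffact l : ℚ))⁻¹).sum
    rw [Multiset.map_map, ← Multiset.sum_map_mul_left]
    congr 1
    refine Multiset.map_congr rfl fun l hl => ?_
    show ((ffact (t :: l) : ℚ))⁻¹ = ((tfact t : ℚ))⁻¹ * ((ffact l : ℚ))⁻¹
    rw [ffact]
    push_cast
    rw [mul_inv]
  calc ((((Finset.range (n+1)).attach.val).map fun j =>
          ((((treesOf (n + 1 - j.1)).bind fun t => (forestsOf j.1).map (t :: ·)).map
            (fun l => ((ffact l : ℚ))⁻¹)).sum)).sum)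
      = ∑ j ∈ (Finset.range (n+1)).attach,
          ((treesOf (n + 1 - j.1)).map (fun t => ((tfact t : ℚ))⁻¹)).sum *
          ((forestsOf j.1).map (fun l => ((ffact l : ℚ))⁻¹)).sum := by
        rw [Finset.sum]
        exact congrArg Multiset.sum (Multiset.map_congr rfl fun j _ => step j)
    _ = ∑ j ∈ Finset.range (n+1),
          ((treesOf (n + 1 - j)).map (fun t => ((tfact t : ℚ))⁻¹)).sum *
          ((forestsOf j).map (fun l => ((ffact l : ℚ))⁻¹)).sum := by
        exact Finset.sum_attach (Finset.range (n+1)) (fun j =>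
          ((treesOf (n + 1 - j)).map (fun t => ((tfact t : ℚ))⁻¹)).sum *
          ((forestsOf j).map (fun l => ((ffact l : ℚ))⁻¹)).sum)
    _ = _ := by
        rw [← Finset.sum_range_reflect]
        refine Finset.sum_congr rfl fun k hk => ?_
        simp only [Finset.mem_range] at hk
        have e1 : n + 1 - 1 - k = n - k := by omega
        have e2 : n + 1 - (n - k) = k + 1 := by omega
        rw [e1, e2]

open Finset

lemma key_nat (n : ℕ) :
    2 * ∑ k ∈ Finset.range (n + 1), catalan k * Nat.centralBinom (n - k) =
      Nat.centralBinom (n + 1) := by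
  have h1 : ∑ k ∈ range (n + 1), catalan k * Nat.centralBinom (n - k)
      = ∑ k ∈ range (n + 1), (n - k + 1) * (catalan k * catalan (n - k)) := by
    refine Finset.sum_congr rfl fun k hk => ?_
    rw [← succ_mul_catalan_eq_centralBinom]; ring
  have h2 : ∑ k ∈ range (n + 1), (n - k + 1) * (catalan k * catalan (n - k))
      = ∑ k ∈ range (n + 1), (k + 1) * (catalan k * catalan (n - k)) := by
    rw [← Finset.sum_range_reflect]
    refine Finset.sum_congr rfl fun k hk => ?_
    simp only [Finset.mem_range] at hk
    have hk' : k ≤ n := by omega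
    have e1 : n + 1 - 1 - k = n - k := by omega
    have e2 : n - (n - k) = k := by omega
    rw [e1, e2]
    ring
  have h3 : ∑ k ∈ range (n + 1), catalan k * catalan (n - k) = catalan (n + 1) := by
    rw [catalan_succ, ← Fin.sum_univ_eq_sum_range]
  have h4 : (n + 1 + 1) * catalan (n + 1) = Nat.centralBinom (n + 1) :=
    succ_mul_catalan_eq_centralBinom (n + 1)
  calc 2 * ∑ k ∈ range (n + 1), catalan k * Nat.centralBinom (n - k)
      = ∑ k ∈ range (n + 1), (n - k + 1) * (catalan k * catalan (n - k))
        + ∑ k ∈ range (n + 1), (k + 1) * (catalan k * catalan (n - k)) := by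
        rw [h1, h2, two_mul, ← h2]
    _ = ∑ k ∈ range (n + 1), (n + 2) * (catalan k * catalan (n - k)) := by
        rw [← Finset.sum_add_distrib]
        refine Finset.sum_congr rfl fun k hk => ?_
        simp only [Finset.mem_range] at hk
        have : n - k + 1 + (k + 1) = n + 2 := by omega
        rw [← add_mul, this]
    _ = Nat.centralBinom (n + 1) := by
        rw [← Finset.mul_sum, h3, ← h4]

variable {F : Type*} [Field F] [CharZero F]

lemma cb_cast (k : ℕ) : (Nat.centralBinom k : F) = ((k : F) + 1) * catalan k := by
  exact_mod_cast (succ_mul_catalan_eq_centralBinom k).symm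

lemma key_field (n : ℕ) :
    ∑ k ∈ Finset.range (n + 1),
      ((2 : F)⁻¹ ^ k * catalan k) * ((2 : F)⁻¹ ^ (n - k) * Nat.centralBinom (n - k)) =
      (2 : F)⁻¹ ^ (n + 1) * Nat.centralBinom (n + 1) := by
  have h2 : (2 : F) ≠ 0 := two_ne_zero
  have : ∀ k ∈ range (n + 1),
      ((2 : F)⁻¹ ^ k * catalan k) * ((2 : F)⁻¹ ^ (n - k) * Nat.centralBinom (n - k))
      = (2 : F)⁻¹ ^ n * (catalan k * Nat.centralBinom (n - k)) := by
    intro k hk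
    simp only [Finset.mem_range] at hk
    have : k + (n - k) = n := by omega
    rw [show (2 : F)⁻¹ ^ n = (2:F)⁻¹ ^ k * (2:F)⁻¹ ^ (n-k) by rw [← pow_add, this]]
    ring
  rw [Finset.sum_congr rfl this, ← Finset.mul_sum]
  have hkey : (2 : F) * ∑ k ∈ range (n + 1), (catalan k : F) * Nat.centralBinom (n - k)
      = Nat.centralBinom (n + 1) := by
    exact_mod_cast congrArg (Nat.cast : ℕ → F) (key_nat n)
  rw [pow_succ]
  linear_combination ((2:F)⁻¹ ^ n * 2⁻¹) * hkey

end Aux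

/-- let `X(α) = Σ_{n ≥ 1} aₙ αⁿ` be the solution of the
combinatorial Dyson–Schwinger equation `X = α B₊(1/(1-X))`, encoded by the
coefficient recursion `aₙ₊₁ = B₊(bₙ)`, `b₀ = 1`, `bₙ = Σ_{k=1}^{n} aₖ bₙ₋ₖ`
(so that `bₙ = Σ_k Σ_{i₁+⋯+i_k=n} a_{i₁}⋯a_{i_k}`), and let `φ : H_R → K[x]`
be the algebra morphism with `φ ∘ B₊ = ∫₀ ∘ φ`.  Then
`φ(aₙ₊₁) = 2⁻ⁿ Cₙ xⁿ⁺¹` with `Cₙ` the `n`-th Catalan number; equivalently,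
`Σ_{|t| = n+1} σ(t)/t! = 2⁻ⁿ Cₙ`, the sum over trees with `n+1` nodes weighted
by the number `σ(t)` of planar embeddings. -/
theorem dyson_schwinger_catalan
    (I : K[X] →ₗ[K] K[X])
    (hI : ∀ n : ℕ, I (X ^ n) = C (((n : K) + 1)⁻¹) * X ^ (n + 1))
    (φ : HTrees K →ₐ[K] K[X])
    (hφ : ∀ h : HTrees K, φ (Bplus K h) = I (φ h))
    (a b : ℕ → HTrees K)
    (ha0 : a 0 = 0) (hb0 : b 0 = 1)
    (hb : ∀ n : ℕ,
      b (n + 1) = ∑ k ∈ Finset.range (n + 1), a (k + 1) * b (n - k))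
    (ha : ∀ n : ℕ, a (n + 1) = Bplus K (b n)) :
    (∀ n : ℕ, φ (a (n + 1)) =
      C ((2 : K)⁻¹ ^ n * (catalan n : K)) * X ^ (n + 1)) ∧
    (∀ n : ℕ,
      ((treesOf (n + 1)).map (fun t => ((tfact t : ℚ))⁻¹)).sum =
        (2 : ℚ)⁻¹ ^ n * (catalan n : ℚ)) := by
  -- Part 2 prerequisites: `FS n = 2⁻¹ⁿ * centralBinom n`.
  have hFS : ∀ n : ℕ, ((forestsOf n).map (fun l => ((ffact l : ℚ))⁻¹)).sum
      = (2 : ℚ)⁻¹ ^ n * (Nat.centralBinom n : ℚ) := by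
    intro n
    induction n using Nat.strong_induction_on with
    | _ n IH =>
      match n with
      | 0 => simp [FS_zero, Nat.centralBinom_zero]
      | n + 1 =>
        rw [FS_succ]
        have : ∀ k ∈ Finset.range (n + 1),
            ((treesOf (k + 1)).map (fun t => ((tfact t : ℚ))⁻¹)).sum *
            ((forestsOf (n - k)).map (fun l => ((ffact l : ℚ))⁻¹)).sum
            = ((2 : ℚ)⁻¹ ^ k * (catalan k : ℚ)) *
              ((2 : ℚ)⁻¹ ^ (n - k) * (Nat.centralBinom (n - k) : ℚ)) := by
          intro k hk
          simp only [Finset.mem_range] at hk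
          rw [TS_succ, IH k (by omega), IH (n - k) (by omega)]
          rw [cb_cast (F := ℚ) k]
          have hk0 : ((k : ℚ) + 1) ≠ 0 := by positivity
          field_simp
        rw [Finset.sum_congr rfl this, key_field]
  -- the scalar fact `(n+1)⁻¹ * cb n = catalan n`
  have hcat : ∀ (F : Type) [Field F] [CharZero F] (n : ℕ),
      ((n : F) + 1)⁻¹ * (Nat.centralBinom n : F) = (catalan n : F) := by
    intro F _ _ n
    have hn0 : ((n : F) + 1) ≠ 0 := Nat.cast_add_one_ne_zero n
    rw [cb_cast, inv_mul_cancel_left₀ hn0]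
  -- Part 1 prerequisites: `φ (b n) = C (2⁻¹ⁿ * centralBinom n) * Xⁿ`.
  have hIC : ∀ (c : K) (k : ℕ), I (C c * X ^ k) = C (((k : K) + 1)⁻¹ * c) * X ^ (k + 1) := by
    intro c k
    rw [← Polynomial.smul_eq_C_mul, map_smul, hI k, Polynomial.smul_eq_C_mul, ← mul_assoc,
      ← Polynomial.C_mul, mul_comm c]
  have hA : ∀ k : ℕ,
      φ (b k) = C ((2 : K)⁻¹ ^ k * (Nat.centralBinom k : K)) * X ^ k →
      φ (a (k + 1)) = C ((2 : K)⁻¹ ^ k * (catalan k : K)) * X ^ (k + 1) := by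
    intro k hbk
    rw [ha k, hφ, hbk, hIC]
    congr 1
    rw [← mul_assoc, mul_comm (((k : K) + 1)⁻¹), mul_assoc, hcat]
  have hQ : ∀ n : ℕ,
      φ (b n) = C ((2 : K)⁻¹ ^ n * (Nat.centralBinom n : K)) * X ^ n := by
    intro n
    induction n using Nat.strong_induction_on with
    | _ n IH =>
      match n with
      | 0 => simp [hb0, Nat.centralBinom_zero]
      | n + 1 =>
        rw [hb n, map_sum]
        have : ∀ k ∈ Finset.range (n + 1),
            φ (a (k + 1) * b (n - k))
            = C (((2 : K)⁻¹ ^ k * (catalan k : K)) *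
                ((2 : K)⁻¹ ^ (n - k) * (Nat.centralBinom (n - k) : K))) * X ^ (n + 1) := by
          intro k hk
          simp only [Finset.mem_range] at hk
          rw [map_mul, hA k (IH k (by omega)), IH (n - k) (by omega)]
          have hX : (X : K[X]) ^ (k + 1) * X ^ (n - k) = X ^ (n + 1) := by
            rw [← pow_add]
            congr 1
            omega
          rw [← hX]
          simp only [Polynomial.C_mul]
          ring
        rw [Finset.sum_congr rfl this, ← Finset.sum_mul, ← map_sum, key_field]
  constructor
  · intro n
    exact hA n (hQ n)
  · intro n
    rw [TS_succ, hFS n, ← mul_assoc, mul_comm (((n : ℚ) + 1)⁻¹), mul_assoc, hcat]
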